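/- The 2×2 matrix M = [[(n+m-2)/(n+m), 2/(n+m)], [((n-1)/n + (m-1)/m)/(n+m), (n+m-2)/(n+m)]] has eigenvalues λ_± = 1 - (2/(n+m))(1 ± √(1 - 1/(2n) - 1/(2m))), and its spectral radius is λ_- = 1 - (2/(n+m))(1 - √(1 - 1/(2n) - 1/(2m))). -/

import Mathlib

open Matrix

/-- The reduced 2×2 matrix for two coalescing random walks on `K_{n,m}`. -/
noncomputable def crwReducedMatrix (n m : ℕ) : Matrix (Fin 2) (Fin 2) ℝ :=
  !![((n : ℝ) + m - 2) / ((n : ℝ) + m), 2 / ((n : ℝ) + m);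
     (((n : ℝ) - 1) / n + ((m : ℝ) - 1) / m) / ((n : ℝ) + m),
       ((n : ℝ) + m - 2) / ((n : ℝ) + m)]

/-- The matrix `M = [[(n+m-2)/(n+m), 2/(n+m)], [((n-1)/n + (m-1)/m)/(n+m), (n+m-2)/(n+m)]]`
has eigenvalues `λ± = 1 - (2/(n+m))(1 ± √(1 - 1/(2n) - 1/(2m)))`, and its spectral radius
is `λ₋ = 1 - (2/(n+m))(1 - √(1 - 1/(2n) - 1/(2m)))`. -/
theorem crw_reduced_matrix_eigenvalues (n m : ℕ) (hmn : m ≤ n)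
    (hirr : 2 ≤ m ∨ (m = 1 ∧ 3 ≤ n)) :
    det (crwReducedMatrix n m
        - (1 - (2 / ((n : ℝ) + m)) * (1 + Real.sqrt (1 - 1 / (2 * n) - 1 / (2 * m)))) • 1)
      = 0 ∧
    det (crwReducedMatrix n m
        - (1 - (2 / ((n : ℝ) + m)) * (1 - Real.sqrt (1 - 1 / (2 * n) - 1 / (2 * m)))) • 1)
      = 0 ∧
    ∀ z : ℂ, det ((crwReducedMatrix n m).map (Complex.ofReal ·) - z • 1) = 0 →
      ‖z‖
        ≤ 1 - (2 / ((n : ℝ) + m)) * (1 - Real.sqrt (1 - 1 / (2 * n) - 1 / (2 * m))) := by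
  have hm1 : 1 ≤ m := by rcases hirr with h | ⟨h, _⟩ <;> omega
  have hn1 : 1 ≤ n := le_trans hm1 hmn
  have hM : (1:ℝ) ≤ m := by exact_mod_cast hm1
  have hN : (1:ℝ) ≤ n := by exact_mod_cast hn1
  have hMpos : (0:ℝ) < m := by linarith
  have hNpos : (0:ℝ) < n := by linarith
  have hS : (0:ℝ) < (n:ℝ) + m := by linarith
  set D : ℝ := 1 - 1 / (2 * (n:ℝ)) - 1 / (2 * (m:ℝ)) with hDdef
  have hD0 : 0 ≤ D := by
    have h1 : 1 / (2 * (n:ℝ)) ≤ 1 / 2 := by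
      apply div_le_div_of_nonneg_left <;> linarith
    have h2 : 1 / (2 * (m:ℝ)) ≤ 1 / 2 := by
      apply div_le_div_of_nonneg_left <;> linarith
    simp only [hDdef]; linarith
  set r := Real.sqrt D with hrdef
  have hr0 : 0 ≤ r := Real.sqrt_nonneg _
  have hsq : r ^ 2 = D := Real.sq_sqrt hD0
  set a : ℝ := ((n:ℝ) + m - 2) / ((n:ℝ) + m) with hadef
  set bc : ℝ := (2 / ((n:ℝ) + m)) * ((((n:ℝ) - 1) / n + ((m:ℝ) - 1) / m) / ((n:ℝ) + m))
    with hbcdef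
  have hdet : ∀ lam : ℝ, det (crwReducedMatrix n m - lam • 1) = (a - lam) ^ 2 - bc := by
    intro lam
    simp [crwReducedMatrix, Matrix.det_fin_two, Matrix.sub_apply, Matrix.smul_apply,
      Matrix.one_apply, hadef, hbcdef]
    ring
  have hbc : bc = ((2 / ((n:ℝ) + m)) * r) ^ 2 := by
    have : ((2 / ((n:ℝ) + m)) * r) ^ 2 = (2 / ((n:ℝ) + m)) ^ 2 * D := by
      rw [mul_pow, hsq]
    rw [this, hbcdef, hDdef]
    field_simp
    ring
  have ha0 : 0 ≤ a := by
    rw [hadef]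
    apply div_nonneg <;> linarith
  have htr0 : 0 ≤ (2 / ((n:ℝ) + m)) * r := by positivity
  refine ⟨?_, ?_, ?_⟩
  · rw [hdet]
    have e1 : a - (1 - 2 / ((n:ℝ) + m) * (1 + r)) = (2 / ((n:ℝ) + m)) * r := by
      rw [hadef]; field_simp; ring
    rw [e1, hbc, sub_self]
  · rw [hdet]
    have e1 : a - (1 - 2 / ((n:ℝ) + m) * (1 - r)) = -((2 / ((n:ℝ) + m)) * r) := by
      rw [hadef]; field_simp; ring
    rw [e1, hbc]; ring
  · intro z hz
    set t : ℝ := (2 / ((n:ℝ) + m)) * r with htdef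
    have hdetC : det ((crwReducedMatrix n m).map (Complex.ofReal ·) - z • 1)
        = ((a:ℂ) - z) ^ 2 - ((bc:ℝ):ℂ) := by
      simp [crwReducedMatrix, Matrix.det_fin_two, Matrix.sub_apply, Matrix.smul_apply,
        Matrix.one_apply, Matrix.map_apply, hadef, hbcdef]
      push_cast
      ring
    rw [hdetC] at hz
    have hz2 : ((a:ℂ) - z) ^ 2 = ((t:ℝ):ℂ) ^ 2 := by
      rw [sub_eq_zero] at hz
      rw [hz, hbc]
      push_cast
      ring
    have hfac : (((a:ℂ) - z) - (t:ℂ)) * (((a:ℂ) - z) + (t:ℂ)) = 0 := by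
      have : (((a:ℂ) - z) - (t:ℂ)) * (((a:ℂ) - z) + (t:ℂ)) = ((a:ℂ) - z) ^ 2 - ((t:ℝ):ℂ) ^ 2 := by
        ring
      rw [this, hz2, sub_self]
    have hrhs : 1 - 2 / ((n:ℝ) + m) * (1 - r) = a + t := by
      rw [hadef, htdef]; field_simp; ring
    rw [hrhs]
    rcases mul_eq_zero.mp hfac with h | h
    · have hzeq : z = ((a - t : ℝ) : ℂ) := by
        push_cast
        linear_combination -h
      rw [hzeq, Complex.norm_real, Real.norm_eq_abs]
      rw [abs_le]
      constructor <;> linarith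
    · have hzeq : z = ((a + t : ℝ) : ℂ) := by
        push_cast
        linear_combination -h
      rw [hzeq, Complex.norm_real, Real.norm_eq_abs]
      rw [abs_le]
      constructor <;> linarith
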